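/- Let W be a finite-dimensional complex vector space with conjugation σ and real points V. For a weight-1 Hodge decomposition A of (W, σ), every v ∈ V is uniquely of the form v = a + σ(a) with a ∈ A, and the rule I_A(a + σ(a)) := (i • a) + σ(i • a) defines an ℝ-linear operator I_A : V → V with I_A ∘ I_A = −id. Moreover the assignment A ↦ I_A is a bijection from the set of weight-1 Hodge decompositions of (W, σ) onto the set of ℝ-linear operators I : V → V with I ∘ I = −id. -/

import Mathlib

/-- The real points of a conjugation `σ` on a complex vector space `W`:
the `ℝ`-subspace `{w | σ w = w}`. -/
def realPoints {W : Type*} [AddCommGroup W] [Module ℂ W] (σ : W →ₗ[ℝ] W) :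
    Submodule ℝ W where
  carrier := {w | σ w = w}
  add_mem' := by
    intro a b ha hb
    simp only [Set.mem_setOf_eq] at *
    rw [map_add, ha, hb]
  zero_mem' := by simp
  smul_mem' := by
    intro c a ha
    simp only [Set.mem_setOf_eq] at *
    rw [map_smul, ha]

/-- A weight-1 Hodge decomposition of `(W, σ)`: a complex subspace `A ⊆ W`
with `W = A ⊕ σ(A)` (as real subspaces, equivalently as sets). -/
def IsHodge1 {W : Type*} [AddCommGroup W] [Module ℂ W] (σ : W →ₗ[ℝ] W)
    (A : Submodule ℂ W) : Prop :=
  IsCompl (A.restrictScalars ℝ) ((A.restrictScalars ℝ).map σ)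

/-- `I` is the complex-structure operator on the real points associated to the
weight-1 Hodge decomposition `A`, i.e. `I (a + σ a) = i • a + σ (i • a)` for `a ∈ A`. -/
def IsHodgeOperator {W : Type*} [AddCommGroup W] [Module ℂ W] (σ : W →ₗ[ℝ] W)
    (A : Submodule ℂ W) (I : realPoints σ →ₗ[ℝ] realPoints σ) : Prop :=
  ∀ a ∈ A, ∀ v : realPoints σ, (v : W) = a + σ a →
    (I v : W) = Complex.I • a + σ (Complex.I • a)

section helpers

variable {W : Type*} [AddCommGroup W] [Module ℂ W] (σ : W →ₗ[ℝ] W)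

lemma realPoints_coe {v : realPoints σ} : σ (v : W) = (v : W) := v.2

/-- Part 1 -/
lemma hodge_exu (hinv : ∀ w : W, σ (σ w) = w)
    {A : Submodule ℂ W} (hA : IsHodge1 σ A)
    {w : W} (hw : σ w = w) : ∃! a : W, a ∈ A ∧ w = a + σ a := by
  obtain ⟨x, y, hx, hy, hxy⟩ := Submodule.codisjoint_iff_exists_add_eq.mp hA.codisjoint w
  rw [Submodule.mem_map] at hy
  obtain ⟨z, hz, rfl⟩ := hy
  rw [Submodule.restrictScalars_mem] at hx hz
  have hdisj := Submodule.disjoint_def.mp hA.disjoint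
  have key : x - z = 0 := by
    have h1 : σ x + z = x + σ z := by
      conv_rhs => rw [hxy, ← hw, ← hxy]
      rw [map_add, hinv]
    have h2 : σ (x - z) = x - z := by
      rw [map_sub]; rw [eq_sub_iff_add_eq, sub_add_eq_add_sub, h1]; abel
    refine hdisj _ (Submodule.restrictScalars_mem ℝ A _ |>.mpr (sub_mem hx hz)) ?_
    exact Submodule.mem_map.mpr ⟨x - z, Submodule.restrictScalars_mem ℝ A _ |>.mpr
      (sub_mem hx hz), h2⟩
  have hxz : x = z := by rwa [sub_eq_zero] at key
  refine ⟨x, ⟨hx, by rw [← hxy, hxz]⟩, ?_⟩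
  rintro a ⟨ha, hwa⟩
  have hd : a - x ∈ (A.restrictScalars ℝ) := sub_mem ha (hxz ▸ hz)
  have hσ : σ (x - a) = a - x := by
    have : a + σ a = x + σ x := by rw [← hwa, ← hxy, hxz]
    rw [map_sub]
    have := sub_eq_sub_iff_add_eq_add.mpr this.symm
    linear_combination (norm := abel) this
  have : a - x = 0 := hdisj _ hd (Submodule.mem_map.mpr
    ⟨x - a, sub_mem (hxz ▸ hz) ha, hσ⟩)
  rwa [sub_eq_zero] at this

/-- Part 2, existence -/
lemma hodge_op_exists (hinv : ∀ w : W, σ (σ w) = w)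
    {A : Submodule ℂ W} (hA : IsHodge1 σ A) :
    ∃ I : realPoints σ →ₗ[ℝ] realPoints σ, IsHodgeOperator σ A I := by
  classical
  set Ar := A.restrictScalars ℝ with hAr
  set p := Submodule.linearProjOfIsCompl Ar (Ar.map σ) hA with hp
  let j : W →ₗ[ℝ] W :=
  { toFun := fun w => Complex.I • w + σ (Complex.I • w)
    map_add' := by
      intro a b
      show Complex.I • (a + b) + σ (Complex.I • (a + b))
        = (Complex.I • a + σ (Complex.I • a)) + (Complex.I • b + σ (Complex.I • b))
      rw [smul_add, map_add]; abel
    map_smul' := by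
      intro r a
      show Complex.I • (r • a) + σ (Complex.I • (r • a))
        = r • (Complex.I • a + σ (Complex.I • a))
      rw [← smul_comm r Complex.I a, map_smul, smul_add] }
  let g : W →ₗ[ℝ] W := j.comp (Ar.subtype.comp p)
  have hg : ∀ x ∈ realPoints σ, g x ∈ realPoints σ := by
    intro x _
    show σ _ = _
    show σ (Complex.I • (p x : W) + σ (Complex.I • (p x : W)))
      = Complex.I • (p x : W) + σ (Complex.I • (p x : W))
    rw [map_add, hinv]; abel
  refine ⟨g.restrict hg, ?_⟩
  intro a ha v hv
  have hpv : p (v : W) = ⟨a, ha⟩ := by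
    rw [hv, map_add]
    rw [show p (σ a) = 0 from Submodule.projectionOnto_apply_of_mem_right hA
      (Submodule.mem_map.mpr ⟨a, ha, rfl⟩)]
    rw [add_zero]
    exact Submodule.linearProjOfIsCompl_apply_left hA ⟨a, ha⟩
  show (g (v : W)) = _
  show Complex.I • (p (v : W) : W) + σ (Complex.I • (p (v : W) : W)) = _
  rw [hpv]

end helpers

section more
variable {W : Type*} [AddCommGroup W] [Module ℂ W] (σ : W →ₗ[ℝ] W)

/-- Part 2, uniqueness -/
lemma hodge_op_unique (hinv : ∀ w : W, σ (σ w) = w)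
    {A : Submodule ℂ W} (hA : IsHodge1 σ A)
    {I I' : realPoints σ →ₗ[ℝ] realPoints σ}
    (hI : IsHodgeOperator σ A I) (hI' : IsHodgeOperator σ A I') : I = I' := by
  ext v
  obtain ⟨a, ⟨ha, hva⟩, -⟩ := hodge_exu σ hinv hA v.2
  have h1 := hI a ha v hva
  have h2 := hI' a ha v hva
  exact h1.trans h2.symm

/-- Part 3 -/
lemma hodge_op_sq (hinv : ∀ w : W, σ (σ w) = w)
    {A : Submodule ℂ W} (hA : IsHodge1 σ A)
    {I : realPoints σ →ₗ[ℝ] realPoints σ} (hI : IsHodgeOperator σ A I)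
    (v : realPoints σ) : I (I v) = -v := by
  obtain ⟨a, ⟨ha, hva⟩, -⟩ := hodge_exu σ hinv hA v.2
  have h1 := hI a ha v hva
  have h2 := hI (Complex.I • a) (A.smul_mem _ ha) (I v) h1
  apply Subtype.ext
  rw [h2]
  have : Complex.I • Complex.I • a = -a := by
    rw [smul_smul, Complex.I_mul_I, neg_one_smul]
  rw [this, map_neg]
  rw [show ((-v : realPoints σ) : W) = -((v : W)) from rfl, hva]
  abel

/-- Part 4 -/
lemma hodge_inj (hinv : ∀ w : W, σ (σ w) = w)
    (hconj : ∀ (c : ℂ) (w : W), σ (c • w) = (starRingEnd ℂ) c • σ w)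
    {A A' : Submodule ℂ W} {I : realPoints σ →ₗ[ℝ] realPoints σ}
    (hA : IsHodge1 σ A) (hA' : IsHodge1 σ A')
    (hI : IsHodgeOperator σ A I) (hI' : IsHodgeOperator σ A' I) : A = A' := by
  have key : ∀ (B B' : Submodule ℂ W), IsHodge1 σ B → IsHodge1 σ B' →
      IsHodgeOperator σ B I → IsHodgeOperator σ B' I → B ≤ B' := by
    intro B B' hB hB' hIB hIB' a ha
    have hva : σ (a + σ a) = a + σ a := by rw [map_add, hinv]; abel
    set v : realPoints σ := ⟨a + σ a, hva⟩ with hv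
    obtain ⟨a', ⟨ha', hva'⟩, -⟩ := hodge_exu σ hinv hB' v.2
    have h1 := hIB a ha v rfl
    have h2 := hIB' a' ha' v hva'
    -- I v = I•a + σ(I•a) = I•a' + σ(I•a')
    have h3 : Complex.I • a + σ (Complex.I • a) = Complex.I • a' + σ (Complex.I • a') :=
      h1.symm.trans h2
    rw [hconj, hconj, Complex.conj_I, neg_smul, neg_smul] at h3
    -- so I•(a - σ a) = I•(a' - σ a')
    have h4 : a + -σ a = a' + -σ a' := by
      have := congrArg (fun w => (-Complex.I) • w) h3
      simpa [smul_add, smul_neg, smul_smul, Complex.I_mul_I, smul_sub] using this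
    have h5 : a + σ a = a' + σ a' := hva'
    have h6 : (2 : ℂ) • a = (2 : ℂ) • a' := by
      rw [two_smul, two_smul]
      calc a + a = (a + σ a) + (a + -σ a) := by abel
        _ = (a' + σ a') + (a' + -σ a') := by rw [h5, h4]
        _ = a' + a' := by abel
    have : a = a' := by
      have := congrArg (fun w => (2 : ℂ)⁻¹ • w) h6
      simpa [smul_smul] using this
    rw [this]; exact ha'
  exact le_antisymm (key A A' hA hA' hI hI') (key A' A hA' hA hI' hI)

end more

section surj
variable {W : Type*} [AddCommGroup W] [Module ℂ W] (σ : W →ₗ[ℝ] W)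

/-- Part 5 -/
lemma hodge_surj (hinv : ∀ w : W, σ (σ w) = w)
    (hconj : ∀ (c : ℂ) (w : W), σ (c • w) = (starRingEnd ℂ) c • σ w)
    (I : realPoints σ →ₗ[ℝ] realPoints σ) (hI : ∀ v : realPoints σ, I (I v) = -v) :
    ∃ A : Submodule ℂ W, IsHodge1 σ A ∧ IsHodgeOperator σ A I := by
  classical
  have hconj2 : (starRingEnd ℂ) (2:ℂ)⁻¹ = (2:ℂ)⁻¹ := by simp [map_ofNat]
  set T : realPoints σ → W :=
    fun v => (2:ℂ)⁻¹ • ((v : W) - Complex.I • (I v : W)) with hT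
  have Tadd : ∀ v w, T (v + w) = T v + T w := by
    intro v w
    simp only [hT, map_add, Submodule.coe_add]
    module
  have Tsmul : ∀ (r : ℝ) v, T (r • v) = r • T v := by
    intro r v
    simp only [hT, map_smul, SetLike.val_smul]
    module
  have hIcoe : ∀ v, (I (I v) : W) = -(v : W) := fun v => by rw [hI v]; rfl
  have TI : ∀ v, T (I v) = Complex.I • T v := by
    intro v
    simp only [hT, hIcoe]
    match_scalars <;> ((try ring); (try norm_num [Complex.I_sq]))
  have Tσ : ∀ v, σ (T v) = (2:ℂ)⁻¹ • ((v : W) + Complex.I • (I v : W)) := by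
    intro v
    simp only [hT]
    rw [hconj, hconj2, map_sub, hconj, Complex.conj_I,
      realPoints_coe σ (v := v), realPoints_coe σ (v := I v)]
    module
  have Tvσ : ∀ v, T v + σ (T v) = (v : W) := by
    intro v
    rw [Tσ]
    simp only [hT]
    module
  let A : Submodule ℂ W :=
  { carrier := Set.range T
    add_mem' := by rintro x y ⟨v, rfl⟩ ⟨w, rfl⟩; exact ⟨v + w, Tadd v w⟩
    zero_mem' := ⟨0, by simp [hT]⟩
    smul_mem' := by
      rintro c x ⟨v, rfl⟩
      refine ⟨c.re • v + c.im • I v, ?_⟩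
      rw [Tadd, Tsmul, Tsmul, TI]
      match_scalars
      · simp only [Complex.coe_algebraMap]
        linear_combination (2:ℂ)⁻¹ * Complex.re_add_im c
      · simp only [Complex.coe_algebraMap]
        linear_combination (-(Complex.I) * (2:ℂ)⁻¹) * Complex.re_add_im c }
  have memA : ∀ x : W, x ∈ A ↔ ∃ v, T v = x := fun x => Iff.rfl
  refine ⟨A, ⟨?_, ?_⟩, ?_⟩
  · -- disjoint
    rw [Submodule.disjoint_def]
    intro x hxA hxS
    rw [Submodule.restrictScalars_mem, memA] at hxA
    obtain ⟨v, hv⟩ := hxA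
    obtain ⟨y, hyA, hyx⟩ := Submodule.mem_map.mp hxS
    rw [Submodule.restrictScalars_mem, memA] at hyA
    obtain ⟨u, hu⟩ := hyA
    have hσx : σ x = T u := by rw [← hyx, ← hu, hinv]
    have e1 : x + σ x = (v : W) := by rw [← hv]; exact Tvσ v
    have e2 : x + σ x = (u : W) := by
      rw [hσx, ← hyx, ← hu, add_comm]; exact Tvσ u
    have huv : v = u := Subtype.ext (e1.symm.trans e2)
    have e3 : σ (T v) = T v := by rw [hv, hσx, ← huv, hv]
    have e4 : T v + T v = (v : W) := by
      have h := Tvσ v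
      rwa [e3] at h
    have e5 : Complex.I • (I v : W) = 0 := by
      simp only [hT] at e4
      have h2 : (v : W) - Complex.I • (I v : W) = (v : W) := by
        calc (v : W) - Complex.I • (I v : W)
            = (2:ℂ)⁻¹ • ((v:W) - Complex.I • (I v : W))
              + (2:ℂ)⁻¹ • ((v:W) - Complex.I • (I v : W)) := by module
          _ = (v : W) := e4
      exact sub_eq_self.mp h2
    have e6 : (I v : W) = 0 := by
      have h7 := congrArg (fun w => (-Complex.I) • w) e5
      simpa [smul_smul, Complex.I_mul_I] using h7
    have e7 : I v = 0 := Subtype.ext e6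
    have e8 : v = 0 := by
      have h := hI v
      rw [e7, map_zero] at h
      exact neg_eq_zero.mp h.symm
    rw [← hv, e8]
    simp [hT]
  · -- codisjoint
    rw [codisjoint_iff, eq_top_iff]
    intro w _
    have hv1m : σ ((2:ℂ)⁻¹ • (w + σ w)) = (2:ℂ)⁻¹ • (w + σ w) := by
      rw [hconj, hconj2, map_add, hinv, add_comm]
    have hv2m : σ ((-(Complex.I) * (2:ℂ)⁻¹) • (w - σ w))
        = (-(Complex.I) * (2:ℂ)⁻¹) • (w - σ w) := by
      rw [hconj, map_sub, hinv]
      rw [show (starRingEnd ℂ) (-(Complex.I) * (2:ℂ)⁻¹) = Complex.I * (2:ℂ)⁻¹ by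
        simp [map_ofNat]]
      match_scalars <;> ring
    set v₁ : realPoints σ := ⟨(2:ℂ)⁻¹ • (w + σ w), hv1m⟩ with hv₁
    set v₂ : realPoints σ := ⟨(-(Complex.I) * (2:ℂ)⁻¹) • (w - σ w), hv2m⟩ with hv₂
    refine Submodule.mem_sup.mpr
      ⟨T v₁ + Complex.I • T v₂, ?_, σ (T v₁ - Complex.I • T v₂), ?_, ?_⟩
    · exact (Submodule.restrictScalars_mem ℝ A _).mpr
        (A.add_mem ⟨v₁, rfl⟩ (A.smul_mem _ ⟨v₂, rfl⟩))
    · exact Submodule.mem_map.mpr ⟨T v₁ - Complex.I • T v₂,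
        (Submodule.restrictScalars_mem ℝ A _).mpr
          (A.sub_mem ⟨v₁, rfl⟩ (A.smul_mem _ ⟨v₂, rfl⟩)), rfl⟩
    · have e1 : σ (T v₁) = (v₁ : W) - T v₁ := by rw [← Tvσ v₁]; abel
      have e2 : σ (T v₂) = (v₂ : W) - T v₂ := by rw [← Tvσ v₂]; abel
      rw [map_sub, hconj Complex.I (T v₂), Complex.conj_I, e1, e2]
      have c1 : (v₁ : W) = (2:ℂ)⁻¹ • (w + σ w) := rfl
      have c2 : (v₂ : W) = (-(Complex.I) * (2:ℂ)⁻¹) • (w - σ w) := rfl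
      rw [c1, c2]
      match_scalars <;> ((try ring); (try norm_num [Complex.I_sq]))
  · -- IsHodgeOperator
    intro a ha v hv
    obtain ⟨u, hu⟩ := ha
    have hvu : v = u := by
      apply Subtype.ext
      rw [hv, ← hu]
      exact Tvσ u
    rw [hvu]
    rw [show Complex.I • a = T (I u) from by rw [← hu, TI]]
    exact (Tvσ (I u)).symm
end surj

/-- **Weight-1 Hodge decompositions are the same as complex structures on the real points.**
Let `W` be a finite-dimensional complex vector space with conjugation `σ` and real points
`V`.  For every weight-1 Hodge decomposition `A` of `(W, σ)`: every `v ∈ V` is uniquely of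
the form `a + σ a` with `a ∈ A`; the rule `a + σ a ↦ i • a + σ (i • a)` determines a unique
`ℝ`-linear operator `I_A` on `V`, and it satisfies `I_A ∘ I_A = -id`.  Moreover `A ↦ I_A`
is a bijection from weight-1 Hodge decompositions onto the operators `I : V → V` with
`I ∘ I = -id`. -/
theorem weight_one_hodge_decompositions_biject_with_complex_structures
    {W : Type*} [AddCommGroup W] [Module ℂ W] [FiniteDimensional ℂ W]
    (σ : W →ₗ[ℝ] W)
    (hinv : ∀ w : W, σ (σ w) = w)
    (hconj : ∀ (c : ℂ) (w : W), σ (c • w) = (starRingEnd ℂ) c • σ w) :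
    (∀ A : Submodule ℂ W, IsHodge1 σ A →
      ∀ w : W, σ w = w → ∃! a : W, a ∈ A ∧ w = a + σ a) ∧
    (∀ A : Submodule ℂ W, IsHodge1 σ A →
      ∃! I : realPoints σ →ₗ[ℝ] realPoints σ, IsHodgeOperator σ A I) ∧
    (∀ (A : Submodule ℂ W) (I : realPoints σ →ₗ[ℝ] realPoints σ),
      IsHodge1 σ A → IsHodgeOperator σ A I → ∀ v : realPoints σ, I (I v) = -v) ∧
    (∀ (A A' : Submodule ℂ W) (I : realPoints σ →ₗ[ℝ] realPoints σ),
      IsHodge1 σ A → IsHodge1 σ A' →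
      IsHodgeOperator σ A I → IsHodgeOperator σ A' I → A = A') ∧
    (∀ I : realPoints σ →ₗ[ℝ] realPoints σ, (∀ v : realPoints σ, I (I v) = -v) →
      ∃ A : Submodule ℂ W, IsHodge1 σ A ∧ IsHodgeOperator σ A I) := by
  refine ⟨?_, ?_, ?_, ?_, ?_⟩
  · intro A hA w hw
    exact hodge_exu σ hinv hA hw
  · intro A hA
    obtain ⟨I, hI⟩ := hodge_op_exists σ hinv hA
    exact ⟨I, hI, fun I' hI' => hodge_op_unique σ hinv hA hI' hI⟩
  · intro A I hA hI v
    exact hodge_op_sq σ hinv hA hI v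
  · intro A A' I hA hA' hI hI'
    exact hodge_inj σ hinv hconj hA hA' hI hI'
  · intro I hI
    exact hodge_surj σ hinv hconj I hI
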